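/- arXiv:2008.01255 — 3 statements merged into one kernel-verified Lean document; each statement's English description precedes it below -/
import Mathlib

section
/- The entries of Ẑ = B̂ D̂^{-1} B̂^T are sums of line impedances over common root paths: for non-root nodes i, j and phases φ ∈ M_i, ψ ∈ M_j, Ẑ_{(i,φ),(j,ψ)} = Σ_{e ∈ E_i ∩ E_j} (Z_e)_{φψ}, where (Z_e)_{φψ} is taken to be 0 if φ ∉ M_e or ψ ∉ M_e. -/
open Finset

lemma sum_subtype_pairs {V : Type*} [Fintype V] [DecidableEq V]
    (s : Finset (Sym2 V)) (Me : Sym2 V → Finset (Fin 3)) (f : Sym2 V × Fin 3 → ℂ) :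
    ∑ q : {q : Sym2 V × Fin 3 // q.1 ∈ s ∧ q.2 ∈ Me q.1}, f q.1
      = ∑ e ∈ s, ∑ φ ∈ Me e, f (e, φ) := by
  rw [← Finset.sum_subtype ((s ×ˢ Finset.univ).filter fun q : Sym2 V × Fin 3 => q.2 ∈ Me q.1)
      (fun q => by simp [Finset.mem_filter, Finset.mem_product]) f]
  rw [Finset.sum_filter, Finset.sum_product]
  refine Finset.sum_congr rfl fun e _ => ?_
  simp [Finset.sum_ite_mem]

/-- The entries of `Ẑ = B̂ D̂⁻¹ B̂ᵀ` are sums of line impedances over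
common root paths: `Ẑ_{(i,φ),(j,ψ)} = Σ_{e ∈ E_i ∩ E_j} (Z_e)_{φψ}`, where
`(Z_e)_{φψ}` is taken to be `0` whenever `φ ∉ M_e` or `ψ ∉ M_e`. -/
theorem Zhat_entries_eq_common_path_impedance
    {V : Type*} [Fintype V] [DecidableEq V]
    (G : SimpleGraph V) [DecidableRel G.Adj] (hG : G.IsTree) (r : V)
    -- the unique path from each node to the root, and its edge set `E_i`
    (P : ∀ i : V, G.Walk i r) (hP : ∀ i, (P i).IsPath)
    (Epath : V → Finset (Sym2 V)) (hE : ∀ i, Epath i = (P i).edges.toFinset)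
    -- phase sets of nodes and edges
    (Mn : V → Finset (Fin 3)) (Me : Sym2 V → Finset (Fin 3))
    (hMr : Mn r = Finset.univ)
    (hMono : ∀ i : V, ∀ φ ∈ Mn i, ∀ e ∈ Epath i, φ ∈ Me e)
    -- line admittance matrices `Y_e` and their inverses `Z_e = Y_e⁻¹`,
    -- supported on the edge phase sets and mutually inverse there
    (Ymat Zmat : Sym2 V → Matrix (Fin 3) (Fin 3) ℂ)
    (hYsupp : ∀ e φ ψ, (φ ∉ Me e ∨ ψ ∉ Me e) → Ymat e φ ψ = 0)
    (hZsupp : ∀ e φ ψ, (φ ∉ Me e ∨ ψ ∉ Me e) → Zmat e φ ψ = 0)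
    (hYZ : ∀ e ∈ G.edgeFinset, ∀ φ ψ : Fin 3,
      (∑ χ, Ymat e φ χ * Zmat e χ ψ) = if φ = ψ ∧ φ ∈ Me e then 1 else 0)
    (hZY : ∀ e ∈ G.edgeFinset, ∀ φ ψ : Fin 3,
      (∑ χ, Zmat e φ χ * Ymat e χ ψ) = if φ = ψ ∧ φ ∈ Me e then 1 else 0)
    -- the matrix B̂
    (Bhat : Matrix {p : V × Fin 3 // p.1 ≠ r ∧ p.2 ∈ Mn p.1}
      {q : Sym2 V × Fin 3 // q.1 ∈ G.edgeFinset ∧ q.2 ∈ Me q.1} ℂ)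
    (hB : ∀ p q, Bhat p q =
      if p.1.2 = q.1.2 ∧ q.1.1 ∈ Epath p.1.1 then -1 else 0)
    -- the block-diagonal matrix D̂⁻¹ of line impedances
    (Dinv : Matrix {q : Sym2 V × Fin 3 // q.1 ∈ G.edgeFinset ∧ q.2 ∈ Me q.1}
      {q : Sym2 V × Fin 3 // q.1 ∈ G.edgeFinset ∧ q.2 ∈ Me q.1} ℂ)
    (hDinv : ∀ q q', Dinv q q' =
      if q.1.1 = q'.1.1 then Zmat q.1.1 q.1.2 q'.1.2 else 0) :
    ∀ p p' : {p : V × Fin 3 // p.1 ≠ r ∧ p.2 ∈ Mn p.1},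
      (Bhat * Dinv * Bhat.transpose) p p' =
        ∑ e ∈ Epath p.1.1 ∩ Epath p'.1.1, Zmat e p.1.2 p'.1.2 := by
  intro p p'
  set i := p.1.1 with hi_def
  set φ0 := p.1.2 with hφ0_def
  set j := p'.1.1 with hj_def
  set ψ0 := p'.1.2 with hψ0_def
  have hφ0Mn : φ0 ∈ Mn i := p.2.2
  have hψ0Mn : ψ0 ∈ Mn j := p'.2.2
  have hEsub : ∀ k : V, Epath k ⊆ G.edgeFinset := by
    intro k e he
    rw [hE] at he
    rw [SimpleGraph.mem_edgeFinset]
    exact (P k).edges_subset_edgeSet (List.mem_toFinset.mp he)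
  -- expand the matrix product
  have expand : (Bhat * Dinv * Bhat.transpose) p p'
      = ∑ q' : {q : Sym2 V × Fin 3 // q.1 ∈ G.edgeFinset ∧ q.2 ∈ Me q.1},
          ∑ q : {q : Sym2 V × Fin 3 // q.1 ∈ G.edgeFinset ∧ q.2 ∈ Me q.1},
          (if φ0 = q.1.2 ∧ q.1.1 ∈ Epath i then (-1 : ℂ) else 0) *
            ((if q.1.1 = q'.1.1 then Zmat q.1.1 q.1.2 q'.1.2 else 0) *
              (if ψ0 = q'.1.2 ∧ q'.1.1 ∈ Epath j then (-1 : ℂ) else 0)) := by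
    simp only [Matrix.mul_apply, Matrix.transpose_apply, hB, hDinv, Finset.sum_mul]
    refine Finset.sum_congr rfl fun q' _ => Finset.sum_congr rfl fun q _ => ?_
    ring
  rw [expand]
  rw [sum_subtype_pairs (G.edgeFinset) Me
      (fun q' => ∑ q : {q : Sym2 V × Fin 3 // q.1 ∈ G.edgeFinset ∧ q.2 ∈ Me q.1},
        (if φ0 = q.1.2 ∧ q.1.1 ∈ Epath i then (-1 : ℂ) else 0) *
          ((if q.1.1 = q'.1 then Zmat q.1.1 q.1.2 q'.2 else 0) *
            (if ψ0 = q'.2 ∧ q'.1 ∈ Epath j then (-1 : ℂ) else 0)))]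
  have step : ∀ e' ∈ G.edgeFinset, ∀ ψ : Fin 3,
      (∑ q : {q : Sym2 V × Fin 3 // q.1 ∈ G.edgeFinset ∧ q.2 ∈ Me q.1},
        (if φ0 = q.1.2 ∧ q.1.1 ∈ Epath i then (-1 : ℂ) else 0) *
          ((if q.1.1 = e' then Zmat q.1.1 q.1.2 ψ else 0) *
            (if ψ0 = ψ ∧ e' ∈ Epath j then (-1 : ℂ) else 0)))
      = ∑ φ ∈ Me e',
          (if φ0 = φ ∧ e' ∈ Epath i then (-1 : ℂ) else 0) *
            (Zmat e' φ ψ *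
              (if ψ0 = ψ ∧ e' ∈ Epath j then (-1 : ℂ) else 0)) := by
    intro e' he' ψ
    rw [sum_subtype_pairs (G.edgeFinset) Me
        (fun q => (if φ0 = q.2 ∧ q.1 ∈ Epath i then (-1 : ℂ) else 0) *
          ((if q.1 = e' then Zmat q.1 q.2 ψ else 0) *
            (if ψ0 = ψ ∧ e' ∈ Epath j then (-1 : ℂ) else 0)))]
    rw [Finset.sum_eq_single_of_mem e' he']
    · simp
    · intro e _ hne
      apply Finset.sum_eq_zero
      intro φ _
      rw [if_neg hne]
      ring
  have key : ∀ e' ∈ G.edgeFinset,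
      (∑ ψ ∈ Me e', ∑ φ ∈ Me e',
        (if φ0 = φ ∧ e' ∈ Epath i then (-1 : ℂ) else 0) *
          (Zmat e' φ ψ * (if ψ0 = ψ ∧ e' ∈ Epath j then (-1 : ℂ) else 0)))
      = if e' ∈ Epath i ∩ Epath j then Zmat e' φ0 ψ0 else 0 := by
    intro e' he'
    by_cases hi : e' ∈ Epath i
    · have hφ0e : φ0 ∈ Me e' := hMono i φ0 hφ0Mn e' hi
      have collapse : ∀ ψ : Fin 3,
          (∑ φ ∈ Me e',
            (if φ0 = φ ∧ e' ∈ Epath i then (-1 : ℂ) else 0) *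
              (Zmat e' φ ψ * (if ψ0 = ψ ∧ e' ∈ Epath j then (-1 : ℂ) else 0)))
          = (-1 : ℂ) * (Zmat e' φ0 ψ * (if ψ0 = ψ ∧ e' ∈ Epath j then (-1 : ℂ) else 0)) := by
        intro ψ
        rw [Finset.sum_eq_single_of_mem φ0 hφ0e]
        · rw [if_pos ⟨rfl, hi⟩]
        · intro φ _ hne
          rw [if_neg (fun h => hne h.1.symm)]
          ring
      simp only [collapse]
      by_cases hj : e' ∈ Epath j
      · have hψ0e : ψ0 ∈ Me e' := hMono j ψ0 hψ0Mn e' hj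
        rw [Finset.sum_eq_single_of_mem ψ0 hψ0e]
        · rw [if_pos ⟨rfl, hj⟩, if_pos (Finset.mem_inter.mpr ⟨hi, hj⟩)]
          ring
        · intro ψ _ hne
          rw [if_neg (fun h => hne h.1.symm)]
          ring
      · rw [if_neg (fun h => hj (Finset.mem_inter.mp h).2)]
        apply Finset.sum_eq_zero
        intro ψ _
        rw [if_neg (fun h => hj h.2)]
        ring
    · rw [if_neg (fun h => hi (Finset.mem_inter.mp h).1)]
      apply Finset.sum_eq_zero
      intro ψ _
      apply Finset.sum_eq_zero
      intro φ _
      rw [if_neg (fun h => hi h.2)]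
      ring
  calc (∑ e' ∈ G.edgeFinset, ∑ ψ ∈ Me e',
          ∑ q : {q : Sym2 V × Fin 3 // q.1 ∈ G.edgeFinset ∧ q.2 ∈ Me q.1},
          (if φ0 = q.1.2 ∧ q.1.1 ∈ Epath i then (-1 : ℂ) else 0) *
            ((if q.1.1 = e' then Zmat q.1.1 q.1.2 ψ else 0) *
              (if ψ0 = ψ ∧ e' ∈ Epath j then (-1 : ℂ) else 0)))
      = ∑ e' ∈ G.edgeFinset, if e' ∈ Epath i ∩ Epath j then Zmat e' φ0 ψ0 else 0 := by
        refine Finset.sum_congr rfl fun e' he' => ?_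
        rw [← key e' he']
        exact Finset.sum_congr rfl fun ψ _ => step e' he' ψ
    _ = ∑ e ∈ Epath i ∩ Epath j, Zmat e φ0 ψ0 := by
        rw [Finset.sum_ite_mem]
        congr 1
        exact Finset.inter_eq_right.mpr
          (fun e he => hEsub i (Finset.mem_inter.mp he).1)
end

section
/- (Case A) Let i, j, k be distinct non-root nodes such that j lies on the path from i to r, j lies on the path from k to r, and E_i ∩ E_k = E_j (the root paths of i and k merge at j), and let φ ∈ M_i ∩ M_j ∩ M_k. Then d_ij^φ < d_ik^φ and d_kj^φ < d_ik^φ. -/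
open Finset

section Aux

variable {V : Type*} [Fintype V] [DecidableEq V]
  (G : SimpleGraph V) [DecidableRel G.Adj]

lemma auxA_unique (hG : G.IsTree) (r : V) (P : ∀ i : V, G.Walk i r) (hP : ∀ i, (P i).IsPath)
    {x : V} (q : G.Walk x r) (hq : q.IsPath) : q = P x := by
  have h := hG.IsAcyclic.path_unique ⟨q, hq⟩ ⟨P x, hP x⟩
  exact congrArg Subtype.val h

lemma auxA_descend (hG : G.IsTree) (r : V) (P : ∀ i : V, G.Walk i r) (hP : ∀ i, (P i).IsPath)
    {a y : V} (h : y ∈ (P a).support) : ∀ e ∈ (P y).edges, e ∈ (P a).edges := by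
  intro e he
  have hdrop := auxA_unique G hG r P hP ((P a).dropUntil y h) ((hP a).dropUntil h)
  rw [← hdrop] at he
  exact (P a).edges_dropUntil_subset h he

lemma auxA_comparable (hG : G.IsTree) (r : V) (P : ∀ i : V, G.Walk i r)
    (hP : ∀ i, (P i).IsPath) {x : V} (p : G.Walk x r) (hp : p.IsPath) :
    ∀ e₁ e₂, e₁ ∈ p.edges → e₂ ∈ p.edges → ∀ a b : V,
      e₁ ∈ (P a).edges → e₂ ∈ (P b).edges →
      e₂ ∈ (P a).edges ∨ e₁ ∈ (P b).edges := by
  suffices H : ∀ (N : ℕ) {x : V} (p : G.Walk x r), p.length ≤ N → p.IsPath →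
      ∀ e₁ e₂, e₁ ∈ p.edges → e₂ ∈ p.edges → ∀ a b : V,
        e₁ ∈ (P a).edges → e₂ ∈ (P b).edges →
        e₂ ∈ (P a).edges ∨ e₁ ∈ (P b).edges by
    exact H p.length p le_rfl hp
  intro N
  induction N with
  | zero =>
    intro x p hl _ e₁ e₂ h1
    have : p.edges = [] := List.eq_nil_of_length_eq_zero (by
      rw [SimpleGraph.Walk.length_edges]; omega)
    rw [this] at h1; simp at h1
  | succ N ihN =>
    intro x p hl hp e₁ e₂ h1 h2 a b ha hb
    cases p with
    | nil => simp at h1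
    | @cons _ v _ h q =>
      have hq : q.IsPath := hp.of_cons
      have hql : q.length ≤ N := by
        rw [SimpleGraph.Walk.length_cons] at hl; omega
      rw [SimpleGraph.Walk.edges_cons, List.mem_cons] at h1 h2
      have hqP : q.edges = (P v).edges := by
        rw [auxA_unique G hG r P hP q hq]
      rcases h1 with rfl | h1
      · left
        have hvs : v ∈ (P a).support := SimpleGraph.Walk.snd_mem_support_of_mem_edges _ ha
        rcases h2 with rfl | h2
        · exact ha
        · exact auxA_descend G hG r P hP hvs e₂ (hqP ▸ h2)
      · rcases h2 with rfl | h2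
        · right
          have hvs : v ∈ (P b).support := SimpleGraph.Walk.snd_mem_support_of_mem_edges _ hb
          exact auxA_descend G hG r P hP hvs e₁ (hqP ▸ h1)
        · exact ihN q hql hq e₁ e₂ h1 h2 a b ha hb

end Aux

/-- **Case A.** If `j` lies on the root paths of both `i` and `k`, and
the root paths of `i` and `k` merge exactly at `j` (`E_i ∩ E_k = E_j`), then for any
phase `φ ∈ M_i ∩ M_j ∩ M_k` we have `d_ij^φ < d_ik^φ` and `d_kj^φ < d_ik^φ`. -/
theorem caseA_parent_child_strict
    {V : Type*} [Fintype V] [DecidableEq V]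
    (G : SimpleGraph V) [DecidableRel G.Adj] (hG : G.IsTree) (r : V)
    -- the unique path from each node to the root, and its edge set `E_i`
    (P : ∀ i : V, G.Walk i r) (hP : ∀ i, (P i).IsPath)
    (Epath : V → Finset (Sym2 V)) (hE : ∀ i, Epath i = (P i).edges.toFinset)
    -- phase sets of nodes and edges
    (Mn : V → Finset (Fin 3)) (Me : Sym2 V → Finset (Fin 3))
    (hMr : Mn r = Finset.univ)
    (hMono : ∀ i : V, ∀ φ ∈ Mn i, ∀ e ∈ Epath i, φ ∈ Me e)
    -- line impedance matrices, supported on the edge phase sets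
    (Zmat : Sym2 V → Matrix (Fin 3) (Fin 3) ℂ)
    (hZsupp : ∀ e φ ψ, (φ ∉ Me e ∨ ψ ∉ Me e) → Zmat e φ ψ = 0)
    -- `Ẑ_{(i,φ),(n,ψ)} = Σ_{e ∈ E_i ∩ E_n} (Z_e)_{φψ}`
    (Zhat : V → Fin 3 → V → Fin 3 → ℂ)
    (hZhat : ∀ i φ n ψ, Zhat i φ n ψ = ∑ e ∈ Epath i ∩ Epath n, Zmat e φ ψ)
    -- path impedances `e_n^{φψ} = Σ_{e ∈ E_n} (Z_e)_{φψ}`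
    (epath : V → Fin 3 → Fin 3 → ℂ)
    (hepath : ∀ n φ ψ, epath n φ ψ = ∑ e ∈ Epath n, Zmat e φ ψ)
    -- injection variances, positive at every non-root node
    (s2 : V → ℝ) (hs2 : ∀ n : V, n ≠ r → 0 < s2 n)
    -- the distance `d_ij^φ`
    (d : V → V → Fin 3 → ℝ)
    (hd : ∀ i j φ, d i j φ = ∑ n ∈ Finset.univ.erase r, ∑ ψ ∈ Mn n,
      s2 n * ‖Zhat i φ n ψ - Zhat j φ n ψ‖ ^ 2)
    -- the phase `φ` and the non-degeneracy assumption for it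
    (φ : Fin 3)
    (hnd : ∀ m n : V, m ≠ n → m ∈ (P n).support →
      ∃ ψ ∈ Mn n, epath m φ ψ ≠ epath n φ ψ)
    -- Case A configuration
    (i j k : V) (hir : i ≠ r) (hjr : j ≠ r) (hkr : k ≠ r)
    (hij : i ≠ j) (hik : i ≠ k) (hjk : j ≠ k)
    (hji : j ∈ (P i).support) (hjk' : j ∈ (P k).support)
    (hmerge : Epath i ∩ Epath k = Epath j)
    (hφ : φ ∈ Mn i ∧ φ ∈ Mn j ∧ φ ∈ Mn k) :
    d i j φ < d i k φ ∧ d k j φ < d i k φ := by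
  have hEji : Epath j ⊆ Epath i := by rw [← hmerge]; exact inter_subset_left
  have hEjk : Epath j ⊆ Epath k := by rw [← hmerge]; exact inter_subset_right
  -- membership translation
  have hmem : ∀ (x : V) (e : Sym2 V), e ∈ Epath x ↔ e ∈ (P x).edges := by
    intro x e; rw [hE]; exact List.mem_toFinset
  -- per-node disjunction: the branches below `j` towards `i` and towards `k`
  -- cannot both meet the root path of `n`
  have hdisj : ∀ n : V,
      (Epath i ∩ Epath n) \ (Epath j ∩ Epath n) = ∅ ∨
      (Epath k ∩ Epath n) \ (Epath j ∩ Epath n) = ∅ := by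
    intro n
    by_contra hcon
    push_neg at hcon
    obtain ⟨h1, h2⟩ := hcon
    obtain ⟨e₁, he₁⟩ := h1
    obtain ⟨e₂, he₂⟩ := h2
    rw [Finset.mem_sdiff, Finset.mem_inter, Finset.mem_inter] at he₁ he₂
    obtain ⟨⟨he₁i, he₁n⟩, he₁j⟩ := he₁
    obtain ⟨⟨he₂k, he₂n⟩, he₂j⟩ := he₂
    have he₁j' : e₁ ∉ Epath j := fun h => he₁j ⟨h, he₁n⟩
    have he₂j' : e₂ ∉ Epath j := fun h => he₂j ⟨h, he₂n⟩
    rcases auxA_comparable G hG r P hP (P n) (hP n) e₁ e₂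
        ((hmem n e₁).mp he₁n) ((hmem n e₂).mp he₂n) i k
        ((hmem i e₁).mp he₁i) ((hmem k e₂).mp he₂k) with h | h
    · exact he₂j' (hmerge ▸ Finset.mem_inter.mpr ⟨(hmem i e₂).mpr h, he₂k⟩)
    · exact he₁j' (hmerge ▸ Finset.mem_inter.mpr ⟨he₁i, (hmem k e₁).mpr h⟩)
  -- difference formulas
  have hA : ∀ (x : V), Epath j ⊆ Epath x → ∀ n ψ, Zhat x φ n ψ - Zhat j φ n ψ =
      ∑ e ∈ (Epath x ∩ Epath n) \ (Epath j ∩ Epath n), Zmat e φ ψ := by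
    intro x hx n ψ
    have hsub : Epath j ∩ Epath n ⊆ Epath x ∩ Epath n :=
      Finset.inter_subset_inter hx (Finset.Subset.refl _)
    rw [hZhat, hZhat, ← Finset.sum_sdiff hsub]
    ring
  -- pointwise Pythagorean identity
  have hkey : ∀ n ψ, ‖Zhat i φ n ψ - Zhat k φ n ψ‖ ^ 2 =
      ‖Zhat i φ n ψ - Zhat j φ n ψ‖ ^ 2 +
      ‖Zhat k φ n ψ - Zhat j φ n ψ‖ ^ 2 := by
    intro n ψ
    rcases hdisj n with h | h
    · have hA0 : Zhat i φ n ψ - Zhat j φ n ψ = 0 := by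
        rw [hA i hEji, h, Finset.sum_empty]
      have hik' : Zhat i φ n ψ - Zhat k φ n ψ = -(Zhat k φ n ψ - Zhat j φ n ψ) := by
        have := sub_eq_zero.mp hA0; rw [this]; ring
      rw [hik', norm_neg, hA0, norm_zero]
      ring
    · have hB0 : Zhat k φ n ψ - Zhat j φ n ψ = 0 := by
        rw [hA k hEjk, h, Finset.sum_empty]
      have hik' : Zhat i φ n ψ - Zhat k φ n ψ = Zhat i φ n ψ - Zhat j φ n ψ := by
        have := sub_eq_zero.mp hB0; rw [this]
      rw [hik', hB0, norm_zero]
      ring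
  -- the sum identity `d i k = d i j + d k j`
  have hsum : d i k φ = d i j φ + d k j φ := by
    rw [hd, hd, hd, ← Finset.sum_add_distrib]
    refine Finset.sum_congr rfl fun n _ => ?_
    rw [← Finset.sum_add_distrib]
    refine Finset.sum_congr rfl fun ψ _ => ?_
    rw [hkey n ψ]; ring
  -- positivity of `d x j` for `x ∈ {i, k}`
  have hpos : ∀ (x : V), x ≠ r → x ≠ j → j ∈ (P x).support → Epath j ⊆ Epath x →
      0 < d x j φ := by
    intro x hxr hxj hjx hEjx
    rw [hd]
    obtain ⟨ψ₀, hψ₀, hne⟩ := hnd j x (fun h => hxj h.symm) hjx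
    apply Finset.sum_pos'
    · intro n hn
      have hnr : n ≠ r := (Finset.mem_erase.mp hn).1
      exact Finset.sum_nonneg fun ψ _ =>
        mul_nonneg (hs2 n hnr).le (by positivity)
    · refine ⟨x, Finset.mem_erase.mpr ⟨hxr, Finset.mem_univ x⟩, ?_⟩
      apply Finset.sum_pos'
      · intro ψ _; exact mul_nonneg (hs2 x hxr).le (by positivity)
      · refine ⟨ψ₀, hψ₀, ?_⟩
        have h1 : Zhat x φ x ψ₀ = epath x φ ψ₀ := by
          rw [hZhat, hepath, Finset.inter_self]
        have h2 : Zhat j φ x ψ₀ = epath j φ ψ₀ := by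
          rw [hZhat, hepath, Finset.inter_eq_left.mpr hEjx]
        have hne' : Zhat x φ x ψ₀ - Zhat j φ x ψ₀ ≠ 0 := by
          rw [h1, h2]; exact sub_ne_zero.mpr (Ne.symm hne)
        exact mul_pos (hs2 x hxr) (pow_pos (norm_pos_iff.mpr hne') 2)
  have hdij : 0 < d i j φ := hpos i hir hij hji hEji
  have hdkj : 0 < d k j φ := hpos k hkr (fun h => hjk h.symm) hjk' hEjk
  constructor
  · rw [hsum]; linarith
  · rw [hsum]; linarith
end

section
/- (Single-phase version) Let G be a finite tree on vertex set N with root r, with a nonzero complex admittance y_e on each edge. Let A be the reduced incidence matrix (rows indexed by N \ {r}, columns by edges, with A_{i,e} = 1 and A_{j,e} = −1 for an edge e oriented from i to j, entries at r deleted), and let D = diag(y_e). Then the reduced admittance matrix Y = A D A^T is invertible and its inverse Z satisfies Z_{i,j} = Σ_{e ∈ E_i ∩ E_j} y_e^{-1} for all non-root nodes i, j, where E_i is the edge set of the unique path from i to r. -/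
open Finset

lemma walk_cons_of_ne {V : Type*} {G : SimpleGraph V} {j r : V} (w : G.Walk j r)
    (hw : w.IsPath) (hne : j ≠ r) :
    ∃ (v : V) (h : G.Adj j v) (w' : G.Walk v r),
      w = SimpleGraph.Walk.cons h w' ∧ w'.IsPath ∧ j ∉ w'.support := by
  cases w with
  | nil => exact absurd rfl hne
  | cons h w' =>
    rw [SimpleGraph.Walk.cons_isPath_iff] at hw
    exact ⟨_, h, w', rfl, hw.1, hw.2⟩

/-- **single-phase version.** For a finite tree with root `r` and a
nonzero complex admittance `y_e` on each edge, with `A` the reduced incidence matrix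
and `D = diag(y_e)`, the reduced admittance matrix `Y = A D Aᵀ` is invertible and its
inverse `Z` satisfies `Z_{i,j} = Σ_{e ∈ E_i ∩ E_j} y_e⁻¹` for all non-root nodes
`i, j`, where `E_i` is the edge set of the unique path from `i` to `r`. -/
theorem single_phase_reduced_admittance_inverse
    {V : Type*} [Fintype V] [DecidableEq V]
    (G : SimpleGraph V) [DecidableRel G.Adj] (hG : G.IsTree) (r : V)
    -- the unique path from each node to the root, and its edge set `E_i`
    (P : ∀ i : V, G.Walk i r) (hP : ∀ i, (P i).IsPath)
    (Epath : V → Finset (Sym2 V)) (hE : ∀ i, Epath i = (P i).edges.toFinset)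
    -- nonzero edge admittances
    (y : Sym2 V → ℂ) (hy : ∀ e ∈ G.edgeFinset, y e ≠ 0)
    -- orientation of each edge away from the root: from parent `par e` to child `chi e`
    (par chi : Sym2 V → V)
    (hor : ∀ e ∈ G.edgeFinset,
      e = s(par e, chi e) ∧ e ∉ Epath (par e) ∧ e ∈ Epath (chi e))
    -- the reduced incidence matrix `A`
    (A : Matrix {i : V // i ≠ r} {e : Sym2 V // e ∈ G.edgeFinset} ℂ)
    (hA : ∀ i e, A i e =
      if (i : V) = par (e : Sym2 V) then 1
      else if (i : V) = chi (e : Sym2 V) then -1 else 0)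
    -- the diagonal matrix of edge admittances `D`
    (D : Matrix {e : Sym2 V // e ∈ G.edgeFinset} {e : Sym2 V // e ∈ G.edgeFinset} ℂ)
    (hD : ∀ e f, D e f = if e = f then y e else 0) :
    IsUnit (A * D * A.transpose) ∧
      ∀ i j : {i : V // i ≠ r},
        (A * D * A.transpose)⁻¹ i j = ∑ e ∈ Epath (i : V) ∩ Epath (j : V), (y e)⁻¹ := by
  classical
  -- Epath of the root is empty
  have hr : Epath r = ∅ := by
    have : P r = SimpleGraph.Walk.nil := (SimpleGraph.Walk.isPath_iff_eq_nil (p := P r)).1 (hP r)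
    simp [hE, this]
  -- Epath j ⊆ edgeFinset
  have hEsub : ∀ j, Epath j ⊆ G.edgeFinset := by
    intro j e he
    rw [hE] at he
    rw [SimpleGraph.mem_edgeFinset]
    exact (P j).edges_subset_edgeSet (List.mem_toFinset.mp he)
  -- parent decomposition
  have hparent : ∀ j : V, j ≠ r → ∃ (v : V) (e0 : Sym2 V),
      e0 = s(j, v) ∧ Epath j = insert e0 (Epath v) ∧ e0 ∉ Epath v ∧
      (P j).length = (P v).length + 1 ∧ j ∉ (P v).support := by
    intro j hj
    obtain ⟨v, h, w', hw, hw'p, hjw⟩ := walk_cons_of_ne (P j) (hP j) hj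
    have hwv : w' = P v := (hG.existsUnique_path v r).unique hw'p (hP v)
    subst hwv
    refine ⟨v, s(j, v), rfl, ?_, ?_, ?_, hjw⟩
    · rw [hE, hE, hw]
      simp [SimpleGraph.Walk.edges_cons]
    · intro hmem
      rw [hE] at hmem
      exact hjw ((P v).fst_mem_support_of_mem_edges (List.mem_toFinset.mp hmem))
    · rw [hw]; simp
  -- chi e ≠ r
  have hchir : ∀ e ∈ G.edgeFinset, chi e ≠ r := by
    intro e he h
    have := (hor e he).2.2
    rw [h, hr] at this
    exact absurd this (Finset.notMem_empty e)
  -- par ≠ chi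
  have hpc : ∀ e ∈ G.edgeFinset, par e ≠ chi e := by
    intro e he
    have h1 := (hor e he).1
    have : G.Adj (par e) (chi e) := by
      rw [← SimpleGraph.mem_edgeSet, ← h1]
      exact SimpleGraph.mem_edgeFinset.mp he
    exact this.ne
  -- chain lemma: Epath (chi e) = insert e (Epath (par e))
  have hchain : ∀ e ∈ G.edgeFinset, Epath (chi e) = insert e (Epath (par e)) := by
    intro e he
    obtain ⟨heq, hnp, hmc⟩ := hor e he
    have hcr : chi e ≠ r := hchir e he
    obtain ⟨v, e0, he0, hEj, he0v, _, hsupp⟩ := hparent (chi e) hcr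
    have hee0 : e = e0 := by
      by_contra hne
      have hmem : e ∈ Epath v := by
        rw [hEj] at hmc
        rcases Finset.mem_insert.mp hmc with h | h
        · exact absurd h hne
        · exact h
      rw [hE] at hmem
      have he' : s(chi e, par e) ∈ (P v).edges := by
        rw [Sym2.eq_swap, ← heq]
        exact List.mem_toFinset.mp hmem
      exact hsupp ((P v).fst_mem_support_of_mem_edges he')
    subst hee0
    have hv : v = par e := by
      have h2 : s(par e, chi e) = s(chi e, v) := heq.symm.trans he0
      rw [Sym2.eq_iff] at h2
      rcases h2 with ⟨h1, _⟩ | ⟨h1, _⟩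
      · exact absurd h1 (hpc e he)
      · exact h1.symm
    rw [hEj, hv]
  -- telescoping sum along a path
  have htel : ∀ i : V, i ≠ r → ∀ (n : ℕ) (j : V), (P j).length = n →
      (∑ e ∈ Epath j, ((if i = chi e then (1:ℂ) else 0) - (if i = par e then 1 else 0)))
        = if i = j then 1 else 0 := by
    intro i hi n
    induction n with
    | zero =>
      intro j hj
      have hjr : j = r := SimpleGraph.Walk.eq_of_length_eq_zero hj
      subst hjr
      simp [hr, if_neg hi]
    | succ n ih =>
      intro j hj
      have hjr : j ≠ r := by
        intro h
        subst h
        rw [(SimpleGraph.Walk.isPath_iff_eq_nil (p := P j)).1 (hP j)] at hj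
        simp at hj
      obtain ⟨v, e0, he0, hEj, he0v, hlen, _⟩ := hparent j hjr
      have hje0 : e0 ∈ Epath j := hEj ▸ Finset.mem_insert_self e0 _
      have he0G : e0 ∈ G.edgeFinset := hEsub j hje0
      obtain ⟨heq0, hnp0, _⟩ := hor e0 he0G
      have hchi0 : chi e0 = j ∧ par e0 = v := by
        have h2 : s(par e0, chi e0) = s(j, v) := heq0.symm.trans he0
        rw [Sym2.eq_iff] at h2
        rcases h2 with ⟨h1, h2⟩ | ⟨h1, h2⟩
        · rw [h1] at hnp0; exact absurd hje0 hnp0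
        · exact ⟨h2, h1⟩
      have hvl : (P v).length = n := by omega
      rw [hEj, Finset.sum_insert he0v, ih v hvl, hchi0.1, hchi0.2]
      ring
  -- the candidate inverse
  set Zf : V → V → ℂ := fun a b => ∑ e ∈ Epath a ∩ Epath b, (y e)⁻¹ with hZf
  set Zm : Matrix {i : V // i ≠ r} {i : V // i ≠ r} ℂ :=
    fun i j => Zf (i : V) (j : V) with hZm
  have hZfr : ∀ b, Zf r b = 0 := by intro b; simp [hZf, hr]
  -- difference of Z-values across an edge
  have hstep : ∀ e ∈ G.edgeFinset, ∀ b, Zf (par e) b - Zf (chi e) b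
      = -(if e ∈ Epath b then (y e)⁻¹ else 0) := by
    intro e he b
    simp only [hZf]
    rw [hchain e he]
    by_cases hb : e ∈ Epath b
    · rw [Finset.insert_inter_of_mem hb,
        Finset.sum_insert (fun h => (hor e he).2.1 (Finset.mem_inter.mp h).1)]
      rw [if_pos hb]; ring
    · rw [Finset.insert_inter_of_notMem hb, if_neg hb]; ring
  -- A entry as a difference of indicators
  have hApc : ∀ (i : {i : V // i ≠ r}) (e : {e : Sym2 V // e ∈ G.edgeFinset}),
      A i e = (if (i : V) = par (e : Sym2 V) then 1 else 0)
        - (if (i : V) = chi (e : Sym2 V) then 1 else 0) := by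
    intro i e
    rw [hA]
    rcases eq_or_ne (i : V) (par (e : Sym2 V)) with h1 | h1
    · have h2 : (i : V) ≠ chi (e : Sym2 V) := h1 ▸ hpc (e : Sym2 V) e.2
      rw [if_pos h1, if_pos h1, if_neg h2, sub_zero]
    · simp only [if_neg h1, zero_sub]
      split_ifs <;> simp
  -- compute A * D
  have hAD : ∀ (i : {i : V // i ≠ r}) (e : {e : Sym2 V // e ∈ G.edgeFinset}),
      (A * D) i e = A i e * y (e : Sym2 V) := by
    intro i e
    rw [Matrix.mul_apply]
    simp only [hD, mul_ite, mul_zero]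
    rw [Finset.sum_ite_eq' Finset.univ e (fun f => A i f * y (f : Sym2 V))]
    simp
  -- column sums of A against Zm
  have hcol : ∀ (e : {e : Sym2 V // e ∈ G.edgeFinset}) (j : {i : V // i ≠ r}),
      (∑ k : {i : V // i ≠ r}, A k e * Zm k j)
        = Zf (par (e : Sym2 V)) (j : V) - Zf (chi (e : Sym2 V)) (j : V) := by
    intro e j
    simp only [hApc, hZm]
    have hsub : ∀ a : V, a ∈ Finset.univ.filter (fun x => x ≠ r) ↔ a ≠ r := by simp
    rw [← Finset.sum_subtype (Finset.univ.filter (fun x => x ≠ r)) hsub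
      (fun a => ((if a = par (e : Sym2 V) then 1 else 0)
        - (if a = chi (e : Sym2 V) then 1 else 0)) * Zf a (j : V))]
    · simp only [sub_mul, one_mul, zero_mul, ite_mul, Finset.sum_sub_distrib]
      rw [Finset.sum_ite_eq' _ (par (e : Sym2 V)) (fun a => Zf a (j : V)),
        Finset.sum_ite_eq' _ (chi (e : Sym2 V)) (fun a => Zf a (j : V))]
      have h1 : (if par (e : Sym2 V) ∈ Finset.univ.filter (fun x => x ≠ r)
          then Zf (par (e : Sym2 V)) (j : V) else 0) = Zf (par (e : Sym2 V)) (j : V) := by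
        by_cases h : par (e : Sym2 V) = r
        · simp [h, hZfr]
        · simp [h]
      have h2 : chi (e : Sym2 V) ∈ Finset.univ.filter (fun x => x ≠ r) := by
        simp [hchir (e : Sym2 V) e.2]
      rw [h1, if_pos h2]
  -- the product is the identity
  have hmul : (A * D * A.transpose) * Zm = 1 := by
    ext i j
    rw [Matrix.mul_assoc, Matrix.mul_apply]
    have hterm : ∀ e : {e : Sym2 V // e ∈ G.edgeFinset},
        (A * D) i e * (A.transpose * Zm) e j
          = if (e : Sym2 V) ∈ Epath (j : V) then
              ((if (i : V) = chi (e : Sym2 V) then (1:ℂ) else 0)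
                - (if (i : V) = par (e : Sym2 V) then 1 else 0))
            else 0 := by
      intro e
      rw [hAD, Matrix.mul_apply]
      simp only [Matrix.transpose_apply]
      rw [hcol e j, hstep (e : Sym2 V) e.2 (j : V), hApc]
      have hy' : y (e : Sym2 V) ≠ 0 := hy _ e.2
      by_cases hb : (e : Sym2 V) ∈ Epath (j : V)
      · rw [if_pos hb, if_pos hb]
        field_simp
        ring
      · rw [if_neg hb, if_neg hb]
        ring
    rw [Finset.sum_congr rfl (fun e _ => hterm e)]
    rw [← Finset.sum_subtype G.edgeFinset (fun x => Iff.rfl)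
      (fun e => if e ∈ Epath (j : V) then
        ((if (i : V) = chi e then (1:ℂ) else 0) - (if (i : V) = par e then 1 else 0)) else 0)]
    rw [Finset.sum_ite_mem, Finset.inter_eq_right.mpr (hEsub (j : V)),
      htel (i : V) i.2 (P (j : V)).length (j : V) rfl, Matrix.one_apply]
    simp [Subtype.ext_iff]
  refine ⟨⟨⟨A * D * A.transpose, Zm, hmul, mul_eq_one_comm.mp hmul⟩, rfl⟩, ?_⟩
  intro i j
  rw [Matrix.inv_eq_right_inv hmul]
end
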